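/- arXiv:1905.11262 — 2 statements merged into one kernel-verified Lean document; each statement's English description precedes it below -/
import Mathlib

section
/- Let u₁, …, uₘ ∈ ℝ³ be vectors whose third coordinates all equal 1, let w₁, …, wₘ be real numbers, and fix an index i. Then ∑_{j ≠ i} wⱼ · ι(uⱼ) * ι(uᵢ) = 0 in ExteriorAlgebra ℝ (ℝ³) if and only if ∑_{j ≠ i} wⱼ · uⱼ = (∑_{j ≠ i} wⱼ) · uᵢ in ℝ³. -/
open ExteriorAlgebra

noncomputable def wedgeForm (f g : (ℝ × ℝ × ℝ) →ₗ[ℝ] ℝ) :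
    (ℝ × ℝ × ℝ) [⋀^Fin 2]→ₗ[ℝ] ℝ :=
  ((Pi.basisFun ℝ (Fin 2)).det).compLinearMap (LinearMap.pi ![f, g])

lemma wedgeForm_apply (f g : (ℝ × ℝ × ℝ) →ₗ[ℝ] ℝ) (v x : ℝ × ℝ × ℝ) :
    wedgeForm f g ![v, x] = f v * g x - f x * g v := by
  simp [wedgeForm, Module.Basis.det_apply, Module.Basis.toMatrix_apply, Matrix.det_fin_two,
    Fin.isValue, Matrix.cons_val_zero, Matrix.cons_val_one, -Pi.basisFun_det]

lemma alt_eval_zero (B : (ℝ × ℝ × ℝ) [⋀^Fin 2]→ₗ[ℝ] ℝ) (v x : ℝ × ℝ × ℝ)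
    (h : ι ℝ v * ι ℝ x = 0) : B ![v, x] = 0 := by
  have h2 : ιMulti ℝ 2 ![v, x] = 0 := by rw [← h]; simp [ιMulti_apply, List.ofFn_succ]
  have h3 := congrArg (liftAlternating (fun i : ℕ =>
    (match i with | 2 => B | _ => 0 : (ℝ × ℝ × ℝ) [⋀^Fin i]→ₗ[ℝ] ℝ))) h2
  rw [liftAlternating_apply_ιMulti, map_zero] at h3
  exact h3

lemma wedge_zero_iff (v x : ℝ × ℝ × ℝ) (hv : v.2.2 = 0) (hx : x.2.2 = 1) :
    ι ℝ v * ι ℝ x = 0 ↔ v = 0 := by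
  constructor
  · intro h
    set p1 : (ℝ × ℝ × ℝ) →ₗ[ℝ] ℝ := LinearMap.fst ℝ ℝ (ℝ × ℝ)
    set p2 : (ℝ × ℝ × ℝ) →ₗ[ℝ] ℝ := (LinearMap.fst ℝ ℝ ℝ).comp (LinearMap.snd ℝ ℝ (ℝ × ℝ))
    set p3 : (ℝ × ℝ × ℝ) →ₗ[ℝ] ℝ := (LinearMap.snd ℝ ℝ ℝ).comp (LinearMap.snd ℝ ℝ (ℝ × ℝ))
    have h1 := alt_eval_zero (wedgeForm p1 p3) v x h
    have h2 := alt_eval_zero (wedgeForm p2 p3) v x h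
    rw [wedgeForm_apply] at h1 h2
    simp only [p1, p2, p3, LinearMap.comp_apply, LinearMap.fst_apply, LinearMap.snd_apply,
      hv, hx, mul_one, mul_zero, sub_zero] at h1 h2
    obtain ⟨a, b, c⟩ := v
    simp_all
  · rintro rfl
    simp

/-- Let `u₁, …, uₘ ∈ ℝ³` have third coordinate equal to `1`, let `w₁, …, wₘ ∈ ℝ`, and
fix an index `i`. Then `∑_{j ≠ i} wⱼ · ι(uⱼ) * ι(uᵢ) = 0` in the exterior algebra of `ℝ³`
iff `∑_{j ≠ i} wⱼ · uⱼ = (∑_{j ≠ i} wⱼ) · uᵢ` in `ℝ³`. -/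
theorem stmt4 (m : ℕ) (u : Fin m → ℝ × ℝ × ℝ) (hu : ∀ j, (u j).2.2 = 1)
    (w : Fin m → ℝ) (i : Fin m) :
    (∑ j ∈ Finset.univ.erase i,
        w j • (ExteriorAlgebra.ι ℝ (u j) * ExteriorAlgebra.ι ℝ (u i))) = 0
    ↔ (∑ j ∈ Finset.univ.erase i, w j • u j)
        = (∑ j ∈ Finset.univ.erase i, w j) • u i := by
  set s := Finset.univ.erase i
  set S := ∑ j ∈ s, w j with hS
  set v : ℝ × ℝ × ℝ := (∑ j ∈ s, w j • u j) - S • u i with hv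
  have hlhs : (∑ j ∈ s, w j • (ι ℝ (u j) * ι ℝ (u i))) = ι ℝ v * ι ℝ (u i) := by
    rw [hv, map_sub, sub_mul, map_smul, smul_mul_assoc, ι_sq_zero, smul_zero, sub_zero,
      map_sum, Finset.sum_mul]
    simp [smul_mul_assoc]
  have hv22 : v.2.2 = 0 := by
    have : (∑ j ∈ s, w j • u j).2.2 = ∑ j ∈ s, w j * (u j).2.2 := by
      induction s using Finset.induction with
      | empty => simp
      | insert hj ih => simp_all [Finset.sum_insert]
    simp [hv, this, hu, Prod.smul_def, hS, Finset.sum_mul, Prod.snd_sum, Prod.fst_sum]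
  rw [hlhs, wedge_zero_iff v (u i) hv22 (hu i), hv, sub_eq_zero]
end

section
/- Let A : ℝ³ ≃ₗ[ℝ] ℝ³ be a linear automorphism of ℝ³ (a projective transformation in homogeneous coordinates), let u₁, …, uₙ ∈ ℝ³, let wᵢⱼ be real numbers, and fix an index i. Then ∑_{j ≠ i} wᵢⱼ · ι(A uⱼ) * ι(A uᵢ) = 0 in ExteriorAlgebra ℝ (ℝ³) if and only if ∑_{j ≠ i} wᵢⱼ · ι(uⱼ) * ι(uᵢ) = 0. In particular, the equilibrium condition defining a tensegrity in the 2-form formulation is projectively invariant. -/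
lemma aux_map_sum (n : ℕ) (B : (ℝ × ℝ × ℝ) →ₗ[ℝ] (ℝ × ℝ × ℝ))
    (u : Fin n → ℝ × ℝ × ℝ) (w : Fin n → Fin n → ℝ) (i : Fin n) :
    ExteriorAlgebra.map B
      (∑ j ∈ Finset.univ.erase i,
        w i j • (ExteriorAlgebra.ι ℝ (u j) * ExteriorAlgebra.ι ℝ (u i)))
    = ∑ j ∈ Finset.univ.erase i,
        w i j • (ExteriorAlgebra.ι ℝ (B (u j)) * ExteriorAlgebra.ι ℝ (B (u i))) := by
  rw [map_sum]
  refine Finset.sum_congr rfl fun j _ => ?_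
  simp [ExteriorAlgebra.map_apply_ι]

/-- Projective invariance of the 2-form equilibrium condition: for a linear automorphism
`A` of `ℝ³` (a projective transformation in homogeneous coordinates), vectors
`u₁, …, uₙ ∈ ℝ³`, stresses `wᵢⱼ` and a fixed index `i`,
`∑_{j ≠ i} wᵢⱼ · ι(A uⱼ) * ι(A uᵢ) = 0` iff `∑_{j ≠ i} wᵢⱼ · ι(uⱼ) * ι(uᵢ) = 0`. -/
theorem stmt5 (n : ℕ) (A : (ℝ × ℝ × ℝ) ≃ₗ[ℝ] (ℝ × ℝ × ℝ))
    (u : Fin n → ℝ × ℝ × ℝ) (w : Fin n → Fin n → ℝ) (i : Fin n) :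
    (∑ j ∈ Finset.univ.erase i,
        w i j • (ExteriorAlgebra.ι ℝ (A (u j)) * ExteriorAlgebra.ι ℝ (A (u i)))) = 0
    ↔ (∑ j ∈ Finset.univ.erase i,
        w i j • (ExteriorAlgebra.ι ℝ (u j) * ExteriorAlgebra.ι ℝ (u i))) = 0 := by
  constructor
  · intro h
    have h2 := congrArg (ExteriorAlgebra.map A.symm.toLinearMap) h
    rw [aux_map_sum n A.symm.toLinearMap (fun j => A (u j))] at h2
    simpa using h2
  · intro h
    have h2 := congrArg (ExteriorAlgebra.map A.toLinearMap) h
    rw [aux_map_sum] at h2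
    simpa using h2
end
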